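/- arXiv:2512.10203 — 2 statements merged into one kernel-verified Lean document; each statement's English description precedes it below -/
import Mathlib

section
/- Let E be a real inner product space, X a metric space, U ⊆ X, and Z : E → X → E a map. Suppose there are constants L_Z > 0 and γ > 0 such that: (i) for all μ, ν ∈ U and all p ∈ E, ‖Z(p,μ) − Z(p,ν)‖ ≤ L_Z · dist(μ,ν); and (ii) for all μ ∈ U and all p, q ∈ E, ⟪Z(p,μ) − Z(q,μ), p − q⟫ ≤ −γ‖p − q‖². Then for any μ, ν ∈ U and any p, q ∈ E with Z(p,μ) = Z(q,ν), it holds that ‖p − q‖ ≤ (L_Z/γ) · dist(μ,ν). -/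
open scoped InnerProductSpace

/-- Local Lipschitz price response (Theorem 4): under local Lipschitzness of excess
demand in the distribution and local strong monotonicity in prices, equilibrium
prices respond Lipschitz-continuously to perturbations of the distribution. -/
theorem local_lipschitz_price_response
    {E X : Type*} [NormedAddCommGroup E] [InnerProductSpace ℝ E] [MetricSpace X]
    (U : Set X) (Z : E → X → E) (LZ γ : ℝ) (hLZ : 0 < LZ) (hγ : 0 < γ)
    (hLip : ∀ μ ∈ U, ∀ ν ∈ U, ∀ p : E, ‖Z p μ - Z p ν‖ ≤ LZ * dist μ ν)
    (hMono : ∀ μ ∈ U, ∀ p q : E, ⟪Z p μ - Z q μ, p - q⟫_ℝ ≤ -γ * ‖p - q‖ ^ 2) :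
    ∀ μ ∈ U, ∀ ν ∈ U, ∀ p q : E, Z p μ = Z q ν →
      ‖p - q‖ ≤ (LZ / γ) * dist μ ν := by
  intro μ hμ ν hν p q heq
  have h1 : γ * ‖p - q‖ ^ 2 ≤ ⟪Z q μ - Z q ν, p - q⟫_ℝ := by
    have := hMono μ hμ p q
    have h2 : ⟪Z q μ - Z q ν, p - q⟫_ℝ = -⟪Z p μ - Z q μ, p - q⟫_ℝ := by
      rw [← inner_neg_left]
      congr 1
      rw [← heq]
      abel
    linarith
  have h3 : ⟪Z q μ - Z q ν, p - q⟫_ℝ ≤ (LZ * dist μ ν) * ‖p - q‖ := by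
    calc ⟪Z q μ - Z q ν, p - q⟫_ℝ ≤ ‖Z q μ - Z q ν‖ * ‖p - q‖ :=
          real_inner_le_norm _ _
      _ ≤ (LZ * dist μ ν) * ‖p - q‖ := by
          apply mul_le_mul_of_nonneg_right (hLip μ hμ ν hν q) (norm_nonneg _)
  rcases eq_or_ne p q with h | h
  · simp [h]
    positivity
  · have hn : 0 < ‖p - q‖ := by
      rw [norm_pos_iff, sub_ne_zero]; exact h
    have : γ * ‖p - q‖ ≤ LZ * dist μ ν := by
      have := h1.trans h3
      nlinarith
    rw [div_mul_eq_mul_div, le_div_iff₀ hγ]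
    linarith
end

section
/- Let E be a real inner product space, X a metric space, U ⊆ X, and Z : E → X → E a map. Suppose there are constants L_Z > 0 and γ > 0 such that: (i) for all μ, ν ∈ U and all p ∈ E, ‖Z(p,μ) − Z(p,ν)‖ ≤ L_Z · dist(μ,ν); and (ii) for all μ ∈ U and all p, q ∈ E, ⟪Z(p,μ) − Z(q,μ), p − q⟫ ≤ −γ‖p − q‖². Let W : E → ℝ satisfy |W(p) − W(q)| ≤ L‖p − q‖ for all p, q ∈ E, for some constant L > 0. Then for any μ, ν ∈ U and any p, q ∈ E with Z(p,μ) = Z(q,ν), it holds that W(q) − W(p) ≤ (L·L_Z/γ) · dist(μ,ν). -/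
open scoped InnerProductSpace

/-- Local welfare sensitivity bound (Proposition 5): Sybil-proofness at rate α with
constant C = L·L_Z/γ, combining the Lipschitz price response with Lipschitz
principal utilities. -/
theorem welfare_sensitivity_bound
    {E X : Type*} [NormedAddCommGroup E] [InnerProductSpace ℝ E] [MetricSpace X]
    (U : Set X) (Z : E → X → E) (LZ γ : ℝ) (hLZ : 0 < LZ) (hγ : 0 < γ)
    (hLip : ∀ μ ∈ U, ∀ ν ∈ U, ∀ p : E, ‖Z p μ - Z p ν‖ ≤ LZ * dist μ ν)
    (hMono : ∀ μ ∈ U, ∀ p q : E, ⟪Z p μ - Z q μ, p - q⟫_ℝ ≤ -γ * ‖p - q‖ ^ 2)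
    (W : E → ℝ) (L : ℝ) (hL : 0 < L)
    (hW : ∀ p q : E, |W p - W q| ≤ L * ‖p - q‖) :
    ∀ μ ∈ U, ∀ ν ∈ U, ∀ p q : E, Z p μ = Z q ν →
      W q - W p ≤ (L * LZ / γ) * dist μ ν := by
  intro μ hμ ν hν p q hZ
  -- key: ‖p - q‖ ≤ (LZ/γ) * dist μ ν
  have hkey : γ * ‖p - q‖ ^ 2 ≤ LZ * dist μ ν * ‖p - q‖ := by
    have h1 : γ * ‖p - q‖ ^ 2 ≤ ⟪Z q μ - Z p μ, p - q⟫_ℝ := by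
      have := hMono μ hμ p q
      have : -⟪Z p μ - Z q μ, p - q⟫_ℝ ≥ -(-γ * ‖p - q‖ ^ 2) := by linarith
      rw [← inner_neg_left] at this
      simp only [neg_sub] at this
      linarith
    have h2 : ⟪Z q μ - Z p μ, p - q⟫_ℝ ≤ ‖Z q μ - Z p μ‖ * ‖p - q‖ :=
      real_inner_le_norm _ _
    have h3 : ‖Z q μ - Z p μ‖ ≤ LZ * dist μ ν := by
      rw [hZ, ← norm_neg, neg_sub]
      rw [dist_comm]; exact hLip ν hν μ hμ q
    have h4 : ‖Z q μ - Z p μ‖ * ‖p - q‖ ≤ LZ * dist μ ν * ‖p - q‖ :=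
      mul_le_mul_of_nonneg_right h3 (norm_nonneg _)
    linarith
  have hpq : ‖p - q‖ ≤ LZ / γ * dist μ ν := by
    rcases eq_or_lt_of_le (norm_nonneg (p - q)) with h0 | h0
    · rw [← h0]
      positivity
    · have := hkey
      rw [sq] at this
      have h5 : γ * ‖p - q‖ ≤ LZ * dist μ ν :=
        le_of_mul_le_mul_right (by nlinarith) h0
      rw [div_mul_eq_mul_div, le_div_iff₀ hγ]
      linarith
  have := (abs_le.mp (hW q p)).2
  have : W q - W p ≤ L * ‖p - q‖ := by
    rw [← norm_neg, neg_sub] at this; linarith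
  calc W q - W p ≤ L * ‖p - q‖ := this
    _ ≤ L * (LZ / γ * dist μ ν) := by
        exact mul_le_mul_of_nonneg_left hpq hL.le
    _ = L * LZ / γ * dist μ ν := by ring
end
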